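/- arXiv:2409.13965 — 6 statements merged into one kernel-verified Lean document; each statement's English description precedes it below -/
import Mathlib

section
/- Let σ_z > 0, v₀ ∈ ℝ, and let σ_x, σ_y : ℝ → ℝ be differentiable with σ_x(s) > 0, σ_y(s) > 0 for all s. Define ρ(x, y, s, t) := (2π)^{−3/2}/(σ_x(s)σ_y(s)σ_z)·exp(−x²/(2σ_x(s)²) − y²/(2σ_y(s)²) − (s − v₀t)²/(2σ_z²)), J_s := v₀·ρ, J_x(x, y, s, t) := (x·σ_x'(s)/σ_x(s))·J_s(x, y, s, t), and J_y(x, y, s, t) := (y·σ_y'(s)/σ_y(s))·J_s(x, y, s, t). Then for all (x, y, s, t): ∂J_x/∂x + ∂J_y/∂y + ∂J_s/∂s + ∂ρ/∂t = 0. -/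
open Real

set_option maxHeartbeats 1000000 in
/-- The continuity equation `∂Jx/∂x + ∂Jy/∂y + ∂Js/∂s + ∂ρ/∂t = 0` holds exactly
for the focusing Gaussian beam density `ρ`, longitudinal current `Js = v₀ρ`, and
transverse currents `Jx = (x σx'/σx) Js`, `Jy = (y σy'/σy) Js`. -/
theorem focusing_beam_continuity_equation (σz v₀ : ℝ) (hσz : 0 < σz)
    (σx σy : ℝ → ℝ) (hdx : Differentiable ℝ σx) (hdy : Differentiable ℝ σy)
    (hx : ∀ s, 0 < σx s) (hy : ∀ s, 0 < σy s)
    (ρ Js Jx Jy : ℝ → ℝ → ℝ → ℝ → ℝ)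
    (hρ : ∀ x y s t, ρ x y s t =
      (2 * π) ^ (-(3 : ℝ) / 2) / (σx s * σy s * σz) *
        Real.exp (-(x ^ 2 / (2 * (σx s) ^ 2)) - y ^ 2 / (2 * (σy s) ^ 2)
          - (s - v₀ * t) ^ 2 / (2 * σz ^ 2)))
    (hJs : ∀ x y s t, Js x y s t = v₀ * ρ x y s t)
    (hJx : ∀ x y s t, Jx x y s t = x * deriv σx s / σx s * Js x y s t)
    (hJy : ∀ x y s t, Jy x y s t = y * deriv σy s / σy s * Js x y s t) :
    ∀ x y s t,
      deriv (fun x' => Jx x' y s t) x + deriv (fun y' => Jy x y' s t) y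
        + deriv (fun s' => Js x y s' t) s + deriv (fun t' => ρ x y s t') t = 0 := by
  intro x y s t
  have hXne : σx s ≠ 0 := (hx s).ne'
  have hYne : σy s ≠ 0 := (hy s).ne'
  have hZne : σz ≠ 0 := hσz.ne'
  set A : ℝ := (2 * π) ^ (-(3 : ℝ) / 2) with hA
  have e1 : (fun x' => Jx x' y s t) = fun x' =>
      x' * deriv σx s / σx s *
        (v₀ * (A / (σx s * σy s * σz) *
          Real.exp (-(x' ^ 2 / (2 * (σx s) ^ 2)) - y ^ 2 / (2 * (σy s) ^ 2)
            - (s - v₀ * t) ^ 2 / (2 * σz ^ 2)))) := by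
    funext x'; rw [hJx, hJs, hρ]
  have e2 : (fun y' => Jy x y' s t) = fun y' =>
      y' * deriv σy s / σy s *
        (v₀ * (A / (σx s * σy s * σz) *
          Real.exp (-(x ^ 2 / (2 * (σx s) ^ 2)) - y' ^ 2 / (2 * (σy s) ^ 2)
            - (s - v₀ * t) ^ 2 / (2 * σz ^ 2)))) := by
    funext y'; rw [hJy, hJs, hρ]
  have e3 : (fun s' => Js x y s' t) = fun s' =>
      v₀ * (A / (σx s' * σy s' * σz) *
          Real.exp (-(x ^ 2 / (2 * (σx s') ^ 2)) - y ^ 2 / (2 * (σy s') ^ 2)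
            - (s' - v₀ * t) ^ 2 / (2 * σz ^ 2))) := by
    funext s'; rw [hJs, hρ]
  have e4 : (fun t' => ρ x y s t') = fun t' =>
      A / (σx s * σy s * σz) *
          Real.exp (-(x ^ 2 / (2 * (σx s) ^ 2)) - y ^ 2 / (2 * (σy s) ^ 2)
            - (s - v₀ * t') ^ 2 / (2 * σz ^ 2)) := by
    funext t'; rw [hρ]
  -- x derivative
  have hpx := ((((hasDerivAt_pow 2 x).div_const (2 * (σx s) ^ 2)).neg.sub_const
      (y ^ 2 / (2 * (σy s) ^ 2))).sub_const ((s - v₀ * t) ^ 2 / (2 * σz ^ 2)))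
  have hFx := (((hasDerivAt_id x).mul_const (deriv σx s)).div_const (σx s)).mul
      ((hpx.exp.const_mul (A / (σx s * σy s * σz))).const_mul v₀)
  -- y derivative
  have hpy0 := (hasDerivAt_pow 2 y).div_const (2 * (σy s) ^ 2)
  have hpy := ((hpy0.const_sub (-(x ^ 2 / (2 * (σx s) ^ 2)))).sub_const
      ((s - v₀ * t) ^ 2 / (2 * σz ^ 2)))
  have hFy := (((hasDerivAt_id y).mul_const (deriv σy s)).div_const (σy s)).mul
      ((hpy.exp.const_mul (A / (σx s * σy s * σz))).const_mul v₀)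
  -- s derivative
  have hdX : HasDerivAt σx (deriv σx s) s := (hdx s).hasDerivAt
  have hdY : HasDerivAt σy (deriv σy s) s := (hdy s).hasDerivAt
  have hden := (hdX.mul hdY).mul_const σz
  have hC := (hasDerivAt_const s A).div hden
      (by positivity : σx s * σy s * σz ≠ 0)
  have hq1 := (hasDerivAt_const s (x ^ 2)).div ((hdX.pow 2).const_mul 2)
      (by positivity : 2 * (σx s) ^ 2 ≠ 0)
  have hq2 := (hasDerivAt_const s (y ^ 2)).div ((hdY.pow 2).const_mul 2)
      (by positivity : 2 * (σy s) ^ 2 ≠ 0)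
  have hq3 := (((hasDerivAt_id s).sub_const (v₀ * t)).pow 2).div_const (2 * σz ^ 2)
  have hq := (hq1.neg.sub hq2).sub hq3
  have hFs := (hC.mul hq.exp).const_mul v₀
  -- t derivative
  have hr3 := (((hasDerivAt_const t s).sub ((hasDerivAt_id t).const_mul v₀)).pow 2).div_const
      (2 * σz ^ 2)
  have hr := hr3.const_sub (-(x ^ 2 / (2 * σx s ^ 2)) - y ^ 2 / (2 * σy s ^ 2))
  have hFt := hr.exp.const_mul (A / (σx s * σy s * σz))
  simp only [id_eq] at hFx hFy hFs hFt
  erw [e1, e2, e3, e4, hFx.deriv, hFy.deriv, hFs.deriv, hFt.deriv]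
  simp only [Pi.mul_apply, Pi.div_apply, Pi.neg_apply, Pi.sub_apply, Pi.pow_apply, id_eq]
  set G : ℝ := Real.exp (-(x ^ 2 / (2 * σx s ^ 2)) - y ^ 2 / (2 * σy s ^ 2)
    - (s - v₀ * t) ^ 2 / (2 * σz ^ 2)) with hG
  norm_num
  field_simp
  ring
end

section
/- Fix real numbers x, y, z and positive reals σ_x, σ_y, σ_z with σ_y ≤ σ_x, and set A := σ_y²/σ_x². For ε > 0 and w ∈ (0, 1) define ψ_ε(w) := exp(−(1−w)x²/(2σ_x²(1−w+Aw)) − (1−w)y²/(2σ_y²) − (1−w)z²/(2σ_z²(1−w+εw))) / ((1−w)^{1/2}(1−w+Aw)^{1/2}(1−w+εw)^{1/2}). Then lim_{ε→0⁺} ∫₀¹ (∂ψ_ε/∂x)(w) dw = −(x/σ_x²)·exp(−z²/(2σ_z²))·∫₀¹ exp(−(1−w)x²/(2σ_x²(1−w+Aw)) − (1−w)y²/(2σ_y²)) / (1−w+Aw)^{3/2} dw. -/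
open MeasureTheory Filter Topology

/-- As `ε → 0⁺`, the integral `∫₀¹ ∂ψ_ε/∂x dw` converges to the 2D limit,
the first line of Eq. (17): limit and integration can be interchanged by
dominated convergence. Here `ψ ε x' w` is the integrand of Eq. (16) viewed as a
function of the transverse coordinate `x'`. -/
theorem two_dim_limit_Ex (x y z σx σy σz : ℝ)
    (hσx : 0 < σx) (hσy : 0 < σy) (hσz : 0 < σz) (hyx : σy ≤ σx)
    (A : ℝ) (hA : A = σy ^ 2 / σx ^ 2)
    (ψ : ℝ → ℝ → ℝ → ℝ)
    (hψ : ∀ ε x' w, ψ ε x' w =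
      Real.exp (-((1 - w) * x' ^ 2 / (2 * σx ^ 2 * (1 - w + A * w)))
          - (1 - w) * y ^ 2 / (2 * σy ^ 2)
          - (1 - w) * z ^ 2 / (2 * σz ^ 2 * (1 - w + ε * w))) /
        ((1 - w) ^ ((1 : ℝ) / 2) * (1 - w + A * w) ^ ((1 : ℝ) / 2)
          * (1 - w + ε * w) ^ ((1 : ℝ) / 2))) :
    Tendsto (fun ε => ∫ w in Set.Ioo (0 : ℝ) 1, deriv (fun x' => ψ ε x' w) x)
      (𝓝[>] 0)
      (𝓝 (-(x / σx ^ 2) * Real.exp (-(z ^ 2 / (2 * σz ^ 2))) *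
        ∫ w in Set.Ioo (0 : ℝ) 1,
          Real.exp (-((1 - w) * x ^ 2 / (2 * σx ^ 2 * (1 - w + A * w)))
              - (1 - w) * y ^ 2 / (2 * σy ^ 2)) / (1 - w + A * w) ^ ((3 : ℝ) / 2))) := by
  have hA0 : 0 < A := by rw [hA]; positivity
  have hA1 : A ≤ 1 := by
    rw [hA, div_le_one (by positivity)]
    exact pow_le_pow_left₀ hσy.le hyx 2
  set c : ℝ := -(x / σx ^ 2) * Real.exp (-(z ^ 2 / (2 * σz ^ 2))) with hc
  set h : ℝ → ℝ := fun w =>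
      Real.exp (-((1 - w) * x ^ 2 / (2 * σx ^ 2 * (1 - w + A * w)))
          - (1 - w) * y ^ 2 / (2 * σy ^ 2)) / (1 - w + A * w) ^ ((3 : ℝ) / 2) with hh
  set g : ℝ → ℝ → ℝ := fun ε w =>
      Real.exp (-((1 - w) * x ^ 2 / (2 * σx ^ 2 * (1 - w + A * w)))
          - (1 - w) * y ^ 2 / (2 * σy ^ 2)
          - (1 - w) * z ^ 2 / (2 * σz ^ 2 * (1 - w + ε * w))) *
        (-((1 - w) * (2 * x) / (2 * σx ^ 2 * (1 - w + A * w)))) /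
        ((1 - w) ^ ((1 : ℝ) / 2) * (1 - w + A * w) ^ ((1 : ℝ) / 2)
          * (1 - w + ε * w) ^ ((1 : ℝ) / 2)) with hg
  -- the derivative computation
  have hderiv : ∀ ε w, deriv (fun x' => ψ ε x' w) x = g ε w := by
    intro ε w
    have h1 : HasDerivAt (fun x' : ℝ =>
        -((1 - w) * x' ^ 2 / (2 * σx ^ 2 * (1 - w + A * w)))
          - (1 - w) * y ^ 2 / (2 * σy ^ 2)
          - (1 - w) * z ^ 2 / (2 * σz ^ 2 * (1 - w + ε * w)))
        (-((1 - w) * (2 * x) / (2 * σx ^ 2 * (1 - w + A * w)))) x := by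
      have h0 := (((hasDerivAt_pow 2 x).const_mul (1 - w)).div_const
          (2 * σx ^ 2 * (1 - w + A * w))).neg
      have h0' := (h0.sub_const ((1 - w) * y ^ 2 / (2 * σy ^ 2))).sub_const
          ((1 - w) * z ^ 2 / (2 * σz ^ 2 * (1 - w + ε * w)))
      convert h0' using 1
      · rfl
      · rfl
      · rfl
      · norm_num
    have h2 := h1.exp.div_const ((1 - w) ^ ((1 : ℝ) / 2) * (1 - w + A * w) ^ ((1 : ℝ) / 2)
          * (1 - w + ε * w) ^ ((1 : ℝ) / 2))
    have heq : (fun x' => ψ ε x' w) = fun x' =>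
        Real.exp (-((1 - w) * x' ^ 2 / (2 * σx ^ 2 * (1 - w + A * w)))
          - (1 - w) * y ^ 2 / (2 * σy ^ 2)
          - (1 - w) * z ^ 2 / (2 * σz ^ 2 * (1 - w + ε * w))) /
        ((1 - w) ^ ((1 : ℝ) / 2) * (1 - w + A * w) ^ ((1 : ℝ) / 2)
          * (1 - w + ε * w) ^ ((1 : ℝ) / 2)) := funext fun x' => hψ ε x' w
    rw [heq, h2.deriv]
  have hint_eq : (fun ε => ∫ w in Set.Ioo (0 : ℝ) 1, deriv (fun x' => ψ ε x' w) x)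
      = fun ε => ∫ w in Set.Ioo (0 : ℝ) 1, g ε w := by
    funext ε
    exact setIntegral_congr_fun measurableSet_Ioo fun w _ => hderiv ε w
  rw [hint_eq]
  -- dominated convergence
  have key : Tendsto (fun ε => ∫ w in Set.Ioo (0 : ℝ) 1, g ε w) (𝓝[>] (0 : ℝ))
      (𝓝 (∫ w in Set.Ioo (0 : ℝ) 1, c * h w)) := by
    apply tendsto_integral_filter_of_dominated_convergence
      (fun _ => |x| / (σx ^ 2 * A ^ ((3 : ℝ) / 2)))
    · filter_upwards with ε
      apply Measurable.aestronglyMeasurable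
      apply Measurable.div
      · fun_prop
      · fun_prop
    · filter_upwards [self_mem_nhdsWithin] with ε (hε : 0 < ε)
      filter_upwards [ae_restrict_mem measurableSet_Ioo] with w hw
      obtain ⟨hw0, hw1⟩ := hw
      have hu : 0 < 1 - w := by linarith
      have hv : 0 < 1 - w + A * w := by nlinarith
      have hp : 0 < 1 - w + ε * w := by nlinarith
      have hup : 1 - w ≤ 1 - w + ε * w := by nlinarith
      have hvA : A ≤ 1 - w + A * w := by nlinarith
      have hE : Real.exp (-((1 - w) * x ^ 2 / (2 * σx ^ 2 * (1 - w + A * w)))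
          - (1 - w) * y ^ 2 / (2 * σy ^ 2)
          - (1 - w) * z ^ 2 / (2 * σz ^ 2 * (1 - w + ε * w))) ≤ 1 := by
        apply Real.exp_le_one_iff.mpr
        have t1 : 0 ≤ (1 - w) * x ^ 2 / (2 * σx ^ 2 * (1 - w + A * w)) := by positivity
        have t2 : 0 ≤ (1 - w) * y ^ 2 / (2 * σy ^ 2) := by positivity
        have t3 : 0 ≤ (1 - w) * z ^ 2 / (2 * σz ^ 2 * (1 - w + ε * w)) := by positivity
        linarith
      have hE0 : 0 < Real.exp (-((1 - w) * x ^ 2 / (2 * σx ^ 2 * (1 - w + A * w)))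
          - (1 - w) * y ^ 2 / (2 * σy ^ 2)
          - (1 - w) * z ^ 2 / (2 * σz ^ 2 * (1 - w + ε * w))) := Real.exp_pos _
      have hDpos : 0 < (1 - w) ^ ((1 : ℝ) / 2) * (1 - w + A * w) ^ ((1 : ℝ) / 2)
          * (1 - w + ε * w) ^ ((1 : ℝ) / 2) := by positivity
      rw [hg]
      have hnum : |(1 - w) * (2 * x)| = (1 - w) * (2 * |x|) := by
        rw [abs_mul, abs_of_pos hu, abs_mul]
        simp
      have hden : |2 * σx ^ 2 * (1 - w + A * w)| = 2 * σx ^ 2 * (1 - w + A * w) := by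
        rw [abs_of_pos (by positivity)]
      rw [Real.norm_eq_abs, abs_div, abs_mul, abs_neg, abs_div, abs_of_pos hE0,
        abs_of_pos hDpos, hnum, hden]
      calc Real.exp _ * ((1 - w) * (2 * |x|) / (2 * σx ^ 2 * (1 - w + A * w))) /
            ((1 - w) ^ ((1 : ℝ) / 2) * (1 - w + A * w) ^ ((1 : ℝ) / 2)
              * (1 - w + ε * w) ^ ((1 : ℝ) / 2))
          ≤ 1 * ((1 - w) * (2 * |x|) / (2 * σx ^ 2 * (1 - w + A * w))) /
            ((1 - w) ^ ((1 : ℝ) / 2) * (1 - w + A * w) ^ ((1 : ℝ) / 2)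
              * (1 - w) ^ ((1 : ℝ) / 2)) := by
            gcongr
        _ = |x| / (σx ^ 2 * ((1 - w + A * w) * (1 - w + A * w) ^ ((1 : ℝ) / 2))) := by
            have huu : (1 - w) ^ ((1 : ℝ) / 2) * (1 - w) ^ ((1 : ℝ) / 2) = 1 - w := by
              rw [← Real.rpow_add hu]; norm_num
            have hD2 : (1 - w) ^ ((1 : ℝ) / 2) * (1 - w + A * w) ^ ((1 : ℝ) / 2)
                * (1 - w) ^ ((1 : ℝ) / 2) = (1 - w) * (1 - w + A * w) ^ ((1 : ℝ) / 2) := by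
              rw [mul_right_comm, huu]
            rw [one_mul, hD2]
            have h1 : ((1 - w + A * w) : ℝ) ^ ((1 : ℝ) / 2) ≠ 0 := by positivity
            field_simp
        _ ≤ |x| / (σx ^ 2 * (A * A ^ ((1 : ℝ) / 2))) := by
            gcongr
        _ = |x| / (σx ^ 2 * A ^ ((3 : ℝ) / 2)) := by
            have : A ^ ((3 : ℝ) / 2) = A * A ^ ((1 : ℝ) / 2) := by
              rw [show ((3 : ℝ) / 2) = 1 + 1 / 2 by norm_num, Real.rpow_add hA0,
                Real.rpow_one]
            rw [this]
    · exact integrable_const _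
    · filter_upwards [ae_restrict_mem measurableSet_Ioo] with w hw
      obtain ⟨hw0, hw1⟩ := hw
      have hu : 0 < 1 - w := by linarith
      have hv : 0 < 1 - w + A * w := by nlinarith
      have hcont : ContinuousAt (fun ε => g ε w) 0 := by
        rw [hg]
        have hq : ContinuousAt (fun ε : ℝ => 1 - w + ε * w) 0 := by fun_prop
        have hq0 : (1 - w + (0 : ℝ) * w) ≠ 0 := by simpa using hu.ne'
        apply ContinuousAt.div
        · apply ContinuousAt.mul _ continuousAt_const
          apply Real.continuous_exp.continuousAt.comp
          apply ContinuousAt.sub (ContinuousAt.sub continuousAt_const continuousAt_const)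
          exact ContinuousAt.div continuousAt_const (by fun_prop) (by simpa using
            (mul_ne_zero (by positivity : (2 * σz ^ 2 : ℝ) ≠ 0) hq0))
        · exact ContinuousAt.mul continuousAt_const (hq.rpow_const (Or.inl hq0))
        · simp only [zero_mul, add_zero]
          positivity
      have hlim : Tendsto (fun ε => g ε w) (𝓝[>] (0 : ℝ)) (𝓝 (g 0 w)) :=
        hcont.tendsto.mono_left nhdsWithin_le_nhds
      have hval : g 0 w = c * h w := by
        rw [hg, hh, hc]
        simp only [zero_mul, add_zero]
        have hz : (1 - w) * z ^ 2 / (2 * σz ^ 2 * (1 - w)) = z ^ 2 / (2 * σz ^ 2) := by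
          rw [mul_comm (2 * σz ^ 2) (1 - w), mul_div_mul_left _ _ hu.ne']
        rw [hz]
        have huu : (1 - w) ^ ((1 : ℝ) / 2) * (1 - w) ^ ((1 : ℝ) / 2) = 1 - w := by
          rw [← Real.rpow_add hu]; norm_num
        have hv32 : (1 - w + A * w) ^ ((3 : ℝ) / 2)
            = (1 - w + A * w) * (1 - w + A * w) ^ ((1 : ℝ) / 2) := by
          rw [show ((3 : ℝ) / 2) = 1 + 1 / 2 by norm_num, Real.rpow_add hv, Real.rpow_one]
        rw [show (1 - w) ^ ((1 : ℝ) / 2) * (1 - w + A * w) ^ ((1 : ℝ) / 2)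
            * (1 - w) ^ ((1 : ℝ) / 2)
            = (1 - w) * (1 - w + A * w) ^ ((1 : ℝ) / 2) by rw [mul_right_comm, huu]]
        rw [hv32, Real.exp_sub, Real.exp_neg (z ^ 2 / (2 * σz ^ 2))]
        have h1 : ((1 - w + A * w) : ℝ) ^ ((1 : ℝ) / 2) ≠ 0 := by positivity
        have h2 : Real.exp (z ^ 2 / (2 * σz ^ 2)) ≠ 0 := (Real.exp_pos _).ne'
        field_simp
      rw [hval] at hlim
      exact hlim
  rw [integral_const_mul] at key
  exact key
end

section
/- Fix real numbers x, y, z and positive reals σ_x, σ_y, σ_z with σ_y ≤ σ_x, and set A := σ_y²/σ_x². For ε > 0 and w ∈ (0, 1) define ψ_ε(w) := exp(−(1−w)x²/(2σ_x²(1−w+Aw)) − (1−w)y²/(2σ_y²) − (1−w)z²/(2σ_z²(1−w+εw))) / ((1−w)^{1/2}(1−w+Aw)^{1/2}(1−w+εw)^{1/2}). Then lim_{ε→0⁺} ∫₀¹ (∂ψ_ε/∂y)(w) dw = −(y/σ_y²)·exp(−z²/(2σ_z²))·∫₀¹ exp(−(1−w)x²/(2σ_x²(1−w+Aw)) − (1−w)y²/(2σ_y²))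 / (1−w+Aw)^{1/2} dw. -/
open MeasureTheory Filter Topology

/-- As `ε → 0⁺`, the integral `∫₀¹ ∂ψ_ε/∂y dw` converges to the 2D limit,
the second line of Eq. (17): limit and integration can be interchanged by
dominated convergence. Here `ψ ε y' w` is the integrand of Eq. (16) viewed as a
function of the transverse coordinate `y'`. -/
theorem two_dim_limit_Ey (x y z σx σy σz : ℝ)
    (hσx : 0 < σx) (hσy : 0 < σy) (hσz : 0 < σz) (hyx : σy ≤ σx)
    (A : ℝ) (hA : A = σy ^ 2 / σx ^ 2)
    (ψ : ℝ → ℝ → ℝ → ℝ)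
    (hψ : ∀ ε y' w, ψ ε y' w =
      Real.exp (-((1 - w) * x ^ 2 / (2 * σx ^ 2 * (1 - w + A * w)))
          - (1 - w) * y' ^ 2 / (2 * σy ^ 2)
          - (1 - w) * z ^ 2 / (2 * σz ^ 2 * (1 - w + ε * w))) /
        ((1 - w) ^ ((1 : ℝ) / 2) * (1 - w + A * w) ^ ((1 : ℝ) / 2)
          * (1 - w + ε * w) ^ ((1 : ℝ) / 2))) :
    Tendsto (fun ε => ∫ w in Set.Ioo (0 : ℝ) 1, deriv (fun y' => ψ ε y' w) y)
      (𝓝[>] 0)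
      (𝓝 (-(y / σy ^ 2) * Real.exp (-(z ^ 2 / (2 * σz ^ 2))) *
        ∫ w in Set.Ioo (0 : ℝ) 1,
          Real.exp (-((1 - w) * x ^ 2 / (2 * σx ^ 2 * (1 - w + A * w)))
              - (1 - w) * y ^ 2 / (2 * σy ^ 2)) / (1 - w + A * w) ^ ((1 : ℝ) / 2))) := by
  have hA0 : 0 < A := by rw [hA]; positivity
  have hA1 : A ≤ 1 := by
    rw [hA, div_le_one (by positivity)]
    exact pow_le_pow_left₀ hσy.le hyx 2
  -- step 1: compute the derivative
  have hd : ∀ ε w, deriv (fun y' => ψ ε y' w) y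
      = -((1 - w) * y / σy ^ 2) * ψ ε y w := by
    intro ε w
    have h1 : HasDerivAt (fun y' : ℝ =>
        -((1 - w) * x ^ 2 / (2 * σx ^ 2 * (1 - w + A * w)))
          - (1 - w) * y' ^ 2 / (2 * σy ^ 2)
          - (1 - w) * z ^ 2 / (2 * σz ^ 2 * (1 - w + ε * w)))
        (-((1 - w) * y / σy ^ 2)) y := by
      have h2 : HasDerivAt (fun y' : ℝ => (1 - w) * y' ^ 2 / (2 * σy ^ 2))
          ((1 - w) * (2 * y) / (2 * σy ^ 2)) y := by
        simpa using (((hasDerivAt_pow 2 y).const_mul (1 - w)).div_const (2 * σy ^ 2))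
      have h3 := ((hasDerivAt_const y
          (-((1 - w) * x ^ 2 / (2 * σx ^ 2 * (1 - w + A * w))))).sub h2).sub
          (hasDerivAt_const y ((1 - w) * z ^ 2 / (2 * σz ^ 2 * (1 - w + ε * w))))
      exact h3.congr_deriv (by ring)
    have h4 := (h1.exp).div_const ((1 - w) ^ ((1 : ℝ) / 2)
        * (1 - w + A * w) ^ ((1 : ℝ) / 2) * (1 - w + ε * w) ^ ((1 : ℝ) / 2))
    have h5 : (fun y' => ψ ε y' w) = fun y' =>
        Real.exp (-((1 - w) * x ^ 2 / (2 * σx ^ 2 * (1 - w + A * w)))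
          - (1 - w) * y' ^ 2 / (2 * σy ^ 2)
          - (1 - w) * z ^ 2 / (2 * σz ^ 2 * (1 - w + ε * w))) /
        ((1 - w) ^ ((1 : ℝ) / 2) * (1 - w + A * w) ^ ((1 : ℝ) / 2)
          * (1 - w + ε * w) ^ ((1 : ℝ) / 2)) := funext fun y' => hψ ε y' w
    rw [h5]
    rw [h4.deriv, hψ]
    ring
  simp only [hd]
  rw [← MeasureTheory.integral_const_mul]
  -- positivity facts for w ∈ Ioo 0 1
  have key : ∀ w ∈ Set.Ioo (0:ℝ) 1, ∀ ε : ℝ, 0 ≤ ε →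
      0 < 1 - w ∧ 0 < 1 - w + A * w ∧ 0 < 1 - w + ε * w := by
    intro w hw ε hε
    obtain ⟨hw0, hw1⟩ := hw
    refine ⟨by linarith, by nlinarith, by nlinarith⟩
  -- dominated convergence
  apply MeasureTheory.tendsto_integral_filter_of_dominated_convergence
    (bound := fun _ => |y| / (σy ^ 2 * A ^ ((1:ℝ)/2)))
  · -- measurability
    filter_upwards [self_mem_nhdsWithin] with ε (hε : 0 < ε)
    apply ContinuousOn.aestronglyMeasurable _ measurableSet_Ioo
    simp only [hψ]
    apply ContinuousOn.mul (by fun_prop)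
    apply ContinuousOn.div
    · apply ContinuousOn.rexp
      apply ContinuousOn.sub
      apply ContinuousOn.sub
      · apply ContinuousOn.neg
        apply ContinuousOn.div (by fun_prop) (by fun_prop)
        intro w hw
        have := (key w hw ε hε.le).2.1
        positivity
      · apply ContinuousOn.div (by fun_prop) (by fun_prop)
        intro w hw; positivity
      · apply ContinuousOn.div (by fun_prop) (by fun_prop)
        intro w hw
        have := (key w hw ε hε.le).2.2
        positivity
    · apply ContinuousOn.mul
      apply ContinuousOn.mul
      · exact ContinuousOn.rpow_const (by fun_prop) fun w hw => Or.inr (by norm_num)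
      · exact ContinuousOn.rpow_const (by fun_prop) fun w hw => Or.inr (by norm_num)
      · exact ContinuousOn.rpow_const (by fun_prop) fun w hw => Or.inr (by norm_num)
    · intro w hw
      obtain ⟨p1, p2, p3⟩ := key w hw ε hε.le
      have := Real.rpow_pos_of_pos p1 ((1:ℝ)/2)
      have := Real.rpow_pos_of_pos p2 ((1:ℝ)/2)
      have := Real.rpow_pos_of_pos p3 ((1:ℝ)/2)
      positivity
  · -- bound
    filter_upwards [self_mem_nhdsWithin] with ε (hε : 0 < ε)
    rw [ae_restrict_iff' measurableSet_Ioo]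
    apply ae_of_all
    intro w hw
    obtain ⟨p1, p2, p3⟩ := key w hw ε hε.le
    have hs := Real.rpow_pos_of_pos p1 ((1:ℝ)/2)
    have hq := Real.rpow_pos_of_pos p2 ((1:ℝ)/2)
    have hr := Real.rpow_pos_of_pos p3 ((1:ℝ)/2)
    have hAq := Real.rpow_pos_of_pos hA0 ((1:ℝ)/2)
    rw [hψ, Real.norm_eq_abs, abs_mul, abs_neg, abs_div, abs_mul,
      abs_of_pos p1, abs_of_pos (by positivity : (0:ℝ) < σy ^ 2)]
    have hexp : Real.exp (-((1 - w) * x ^ 2 / (2 * σx ^ 2 * (1 - w + A * w)))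
          - (1 - w) * y ^ 2 / (2 * σy ^ 2)
          - (1 - w) * z ^ 2 / (2 * σz ^ 2 * (1 - w + ε * w))) ≤ 1 := by
      rw [Real.exp_le_one_iff]
      have t1 : 0 ≤ (1 - w) * x ^ 2 / (2 * σx ^ 2 * (1 - w + A * w)) := by positivity
      have t2 : 0 ≤ (1 - w) * y ^ 2 / (2 * σy ^ 2) := by positivity
      have t3 : 0 ≤ (1 - w) * z ^ 2 / (2 * σz ^ 2 * (1 - w + ε * w)) := by positivity
      linarith
    have hD : (1 - w) * A ^ ((1:ℝ)/2) ≤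
        (1 - w) ^ ((1:ℝ)/2) * (1 - w + A * w) ^ ((1:ℝ)/2) * (1 - w + ε * w) ^ ((1:ℝ)/2) := by
      have e1 : A ^ ((1:ℝ)/2) ≤ (1 - w + A * w) ^ ((1:ℝ)/2) :=
        Real.rpow_le_rpow hA0.le (by nlinarith [hw.2]) (by norm_num)
      have e2 : (1 - w) ^ ((1:ℝ)/2) ≤ (1 - w + ε * w) ^ ((1:ℝ)/2) :=
        Real.rpow_le_rpow p1.le (by nlinarith [hw.1]) (by norm_num)
      have e3 : (1 - w) ^ ((1:ℝ)/2) * (1 - w) ^ ((1:ℝ)/2) = 1 - w := by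
        rw [← Real.rpow_add p1]; norm_num
      calc (1 - w) * A ^ ((1:ℝ)/2)
          = (1 - w) ^ ((1:ℝ)/2) * A ^ ((1:ℝ)/2) * (1 - w) ^ ((1:ℝ)/2) := by
            rw [mul_comm ((1-w)^((1:ℝ)/2)) (A ^ ((1:ℝ)/2)), mul_assoc, e3]; ring
        _ ≤ (1 - w) ^ ((1:ℝ)/2) * (1 - w + A * w) ^ ((1:ℝ)/2) * (1 - w + ε * w) ^ ((1:ℝ)/2) := by
            apply mul_le_mul (mul_le_mul_of_nonneg_left e1 hs.le) e2 hs.le (by positivity)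
    have habs : |Real.exp (-((1 - w) * x ^ 2 / (2 * σx ^ 2 * (1 - w + A * w)))
          - (1 - w) * y ^ 2 / (2 * σy ^ 2)
          - (1 - w) * z ^ 2 / (2 * σz ^ 2 * (1 - w + ε * w))) /
        ((1 - w) ^ ((1 : ℝ) / 2) * (1 - w + A * w) ^ ((1 : ℝ) / 2)
          * (1 - w + ε * w) ^ ((1 : ℝ) / 2))| ≤ 1 / ((1 - w) * A ^ ((1:ℝ)/2)) := by
      rw [abs_of_nonneg (by positivity)]
      exact div_le_div₀ (by positivity) hexp (by positivity) hD
    calc (1 - w) * |y| / σy ^ 2 * |_| ≤ (1 - w) * |y| / σy ^ 2 * (1 / ((1 - w) * A ^ ((1:ℝ)/2))) := by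
          exact mul_le_mul_of_nonneg_left habs (by positivity)
      _ = |y| / (σy ^ 2 * A ^ ((1:ℝ)/2)) := by field_simp
  · exact integrable_const _
  · -- pointwise limit
    rw [ae_restrict_iff' measurableSet_Ioo]
    apply ae_of_all
    intro w hw
    obtain ⟨p1, p2, -⟩ := key w hw 0 le_rfl
    simp only [hψ]
    have hcont : ContinuousAt (fun ε : ℝ =>
        -((1 - w) * y / σy ^ 2) *
          (Real.exp (-((1 - w) * x ^ 2 / (2 * σx ^ 2 * (1 - w + A * w)))
              - (1 - w) * y ^ 2 / (2 * σy ^ 2)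
              - (1 - w) * z ^ 2 / (2 * σz ^ 2 * (1 - w + ε * w))) /
            ((1 - w) ^ ((1 : ℝ) / 2) * (1 - w + A * w) ^ ((1 : ℝ) / 2)
              * (1 - w + ε * w) ^ ((1 : ℝ) / 2)))) 0 := by
      apply ContinuousAt.mul continuousAt_const
      apply ContinuousAt.div
      · apply ContinuousAt.rexp
        apply ContinuousAt.sub (ContinuousAt.sub continuousAt_const continuousAt_const)
        apply ContinuousAt.div (by fun_prop) (by fun_prop)
        simp only [zero_mul, add_zero]
        positivity
      · apply ContinuousAt.mul (ContinuousAt.mul continuousAt_const continuousAt_const)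
        exact ContinuousAt.rpow_const (by fun_prop) (Or.inr (by norm_num))
      · have hs := Real.rpow_pos_of_pos p1 ((1:ℝ)/2)
        have hq := Real.rpow_pos_of_pos p2 ((1:ℝ)/2)
        simp only [zero_mul, add_zero]
        positivity
    have := hcont.tendsto.mono_left (nhdsWithin_le_nhds : 𝓝[>] (0:ℝ) ≤ 𝓝 0)
    convert this using 2
    simp only [zero_mul, add_zero]
    have e3 : (1 - w) ^ ((1:ℝ)/2) * (1 - w) ^ ((1:ℝ)/2) = 1 - w := by
      rw [← Real.rpow_add p1]; norm_num
    have hexp : Real.exp (-((1 - w) * x ^ 2 / (2 * σx ^ 2 * (1 - w + A * w)))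
          - (1 - w) * y ^ 2 / (2 * σy ^ 2)
          - (1 - w) * z ^ 2 / (2 * σz ^ 2 * (1 - w))) =
        Real.exp (-((1 - w) * x ^ 2 / (2 * σx ^ 2 * (1 - w + A * w)))
          - (1 - w) * y ^ 2 / (2 * σy ^ 2)) * Real.exp (-(z ^ 2 / (2 * σz ^ 2))) := by
      rw [← Real.exp_add]
      congr 1
      have : (1 - w) * z ^ 2 / (2 * σz ^ 2 * (1 - w)) = z ^ 2 / (2 * σz ^ 2) := by
        rw [mul_comm (2 * σz ^ 2) (1 - w), mul_div_mul_left _ _ (ne_of_gt p1)]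
      rw [this]; ring
    rw [hexp]
    have hQne : (1 - w + A * w) ^ ((1:ℝ)/2) ≠ 0 := (Real.rpow_pos_of_pos p2 _).ne'
    rw [mul_right_comm ((1 - w) ^ ((1:ℝ)/2)) ((1 - w + A * w) ^ ((1:ℝ)/2))
        ((1 - w) ^ ((1:ℝ)/2)), e3]
    generalize Real.exp (-((1 - w) * x ^ 2 / (2 * σx ^ 2 * (1 - w + A * w)))
        - (1 - w) * y ^ 2 / (2 * σy ^ 2)) = E1
    generalize Real.exp (-(z ^ 2 / (2 * σz ^ 2))) = E2
    generalize hQ : (1 - w + A * w) ^ ((1:ℝ)/2) = Q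
    rw [hQ] at hQne
    field_simp
end

section
/- Fix real numbers x, y, z and positive reals σ_x, σ_y, σ_z with σ_y ≤ σ_x, and set A := σ_y²/σ_x². For ε ≥ 0 and w ∈ (0, 1) define ψ_ε(w) := exp(−(1−w)x²/(2σ_x²(1−w+Aw)) − (1−w)y²/(2σ_y²) − (1−w)z²/(2σ_z²(1−w+εw))) / ((1−w)^{1/2}(1−w+Aw)^{1/2}(1−w+εw)^{1/2}). Then lim_{ε→0⁺} ∫₀¹ (∂²ψ_ε/∂x²)(w) dw = ∫₀¹ (∂²ψ₀/∂x²)(w) dw and lim_{ε→0⁺} ∫₀¹ (∂²ψ_ε/∂y²)(w) dw = ∫₀¹ (∂²ψ₀/∂y²)(w) dw, where ψ₀ is obtained by setting ε = 0, and both limiting integrals are finite. -/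
open MeasureTheory Filter Topology

lemma iteratedDeriv_two_gauss (a b D x : ℝ) :
    iteratedDeriv 2 (fun t => Real.exp (b - a * t ^ 2) / D) x
      = (4 * a ^ 2 * x ^ 2 - 2 * a) * Real.exp (b - a * x ^ 2) / D := by
  have h1 : ∀ t : ℝ, HasDerivAt (fun s => Real.exp (b - a * s ^ 2) / D)
      ((Real.exp (b - a * t ^ 2) * -(a * (2 * t))) / D) t := by
    intro t
    have hg : HasDerivAt (fun s : ℝ => b - a * s ^ 2) (-(a * (2 * t))) t := by
      simpa using ((hasDerivAt_pow 2 t).const_mul a).const_sub b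
    exact hg.exp.div_const D
  have hd : deriv (fun t => Real.exp (b - a * t ^ 2) / D)
      = fun t => (Real.exp (b - a * t ^ 2) * -(a * (2 * t))) / D :=
    funext fun t => (h1 t).deriv
  have h2 : HasDerivAt (fun t => (Real.exp (b - a * t ^ 2) * -(a * (2 * t))) / D)
      ((Real.exp (b - a * x ^ 2) * -(a * (2 * x)) * -(a * (2 * x))
        + Real.exp (b - a * x ^ 2) * -(a * 2)) / D) x := by
    have hg : HasDerivAt (fun s : ℝ => b - a * s ^ 2) (-(a * (2 * x))) x := by
      simpa using ((hasDerivAt_pow 2 x).const_mul a).const_sub b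
    have hu : HasDerivAt (fun t : ℝ => -(a * (2 * t))) (-(a * 2)) x := by
      simpa using (((hasDerivAt_id x).const_mul (2 : ℝ)).const_mul a).fun_neg
    exact (hg.exp.mul hu).div_const D
  rw [iteratedDeriv_succ, iteratedDeriv_one, hd, h2.deriv]
  ring


lemma abs_term_le (a e d x m c t : ℝ) (ha0 : 0 ≤ a) (ht0 : 0 < t) (ht1 : t ≤ 1)
    (ham : a ≤ t * m) (he : e ≤ 0) (hc : 0 < c) (hd : t * c ≤ d) :
    |(4 * a ^ 2 * x ^ 2 - 2 * a) * Real.exp e / d| ≤ (4 * m ^ 2 * x ^ 2 + 2 * m) / c := by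
  have hd0 : 0 < d := lt_of_lt_of_le (by positivity) hd
  have hm : 0 ≤ m := by nlinarith
  rw [abs_div, abs_of_pos hd0, abs_mul, abs_of_pos (Real.exp_pos e)]
  have hnum : |4 * a ^ 2 * x ^ 2 - 2 * a| ≤ 4 * a ^ 2 * x ^ 2 + 2 * a :=
    abs_le.mpr ⟨by nlinarith [sq_nonneg (a * x)], by nlinarith⟩
  have hexp1 : Real.exp e ≤ 1 := Real.exp_le_one_iff.mpr he
  have step1 : |4 * a ^ 2 * x ^ 2 - 2 * a| * Real.exp e ≤ 4 * a ^ 2 * x ^ 2 + 2 * a := by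
    calc |4 * a ^ 2 * x ^ 2 - 2 * a| * Real.exp e
        ≤ (4 * a ^ 2 * x ^ 2 + 2 * a) * 1 :=
          mul_le_mul hnum hexp1 (Real.exp_pos e).le (by positivity)
      _ = 4 * a ^ 2 * x ^ 2 + 2 * a := by ring
  have ha2 : a ^ 2 ≤ t * m ^ 2 := by nlinarith
  have key : 4 * a ^ 2 * x ^ 2 + 2 * a ≤ t * (4 * m ^ 2 * x ^ 2 + 2 * m) := by
    nlinarith [mul_le_mul_of_nonneg_right ha2 (sq_nonneg x)]
  calc |4 * a ^ 2 * x ^ 2 - 2 * a| * Real.exp e / d ≤ (4 * a ^ 2 * x ^ 2 + 2 * a) / d := by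
        gcongr
    _ ≤ (4 * m ^ 2 * x ^ 2 + 2 * m) / c := by
        rw [div_le_div_iff₀ hd0 hc]
        nlinarith [mul_le_mul_of_nonneg_right key hc.le,
          mul_le_mul_of_nonneg_left hd (by positivity : (0:ℝ) ≤ 4 * m ^ 2 * x ^ 2 + 2 * m)]

lemma dct_aux (x z σz A : ℝ) (hσz : 0 < σz) (hA0 : 0 < A) (hA1 : A ≤ 1)
    (a c : ℝ → ℝ) (m : ℝ)
    (hmeas_a : Measurable a) (hmeas_c : Measurable c)
    (hconta : ∀ w ∈ Set.Ioo (0:ℝ) 1, 0 ≤ a w ∧ a w ≤ (1 - w) * m)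
    (hcpos : ∀ w ∈ Set.Ioo (0:ℝ) 1, 0 ≤ c w)
    (F : ℝ → ℝ → ℝ)
    (hF : ∀ ε w, F ε w =
      (4 * (a w) ^ 2 * x ^ 2 - 2 * a w) *
        Real.exp (-(c w) - (1 - w) * z ^ 2 / (2 * σz ^ 2 * (1 - w + ε * w)) - a w * x ^ 2) /
        ((1 - w) ^ ((1:ℝ)/2) * (1 - w + A * w) ^ ((1:ℝ)/2) * (1 - w + ε * w) ^ ((1:ℝ)/2))) :
    IntegrableOn (F 0) (Set.Ioo 0 1) ∧
    Tendsto (fun ε => ∫ w in Set.Ioo (0:ℝ) 1, F ε w) (𝓝[>] 0)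
      (𝓝 (∫ w in Set.Ioo (0:ℝ) 1, F 0 w)) := by
  set K : ℝ := (4 * m ^ 2 * x ^ 2 + 2 * m) / A ^ ((1:ℝ)/2) with hK
  have hbound : ∀ ε, 0 ≤ ε → ∀ w ∈ Set.Ioo (0:ℝ) 1, |F ε w| ≤ K := by
    intro ε hε w hw
    obtain ⟨hw0, hw1⟩ := hw
    have h1w : 0 < 1 - w := by linarith
    have h2 : 0 < 1 - w + A * w := by nlinarith
    have h3 : 0 < 1 - w + ε * w := by nlinarith
    rw [hF, hK]
    have ha := hconta w ⟨hw0, hw1⟩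
    refine abs_term_le _ _ _ _ _ _ (1 - w) ha.1 h1w (by linarith) ha.2 ?_
      (Real.rpow_pos_of_pos hA0 _) ?_
    · have h4 : 0 ≤ (1 - w) * z ^ 2 / (2 * σz ^ 2 * (1 - w + ε * w)) := by positivity
      have h5 := hcpos w ⟨hw0, hw1⟩
      have h6 : 0 ≤ a w * x ^ 2 := mul_nonneg ha.1 (sq_nonneg x)
      linarith
    · have hhalf : (1 - w) ^ ((1:ℝ)/2) * (1 - w) ^ ((1:ℝ)/2) = 1 - w := by
        rw [← Real.rpow_add h1w]; norm_num
      have q1 : A ^ ((1:ℝ)/2) ≤ (1 - w + A * w) ^ ((1:ℝ)/2) :=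
        Real.rpow_le_rpow hA0.le (by nlinarith) (by norm_num)
      have q2 : (1 - w) ^ ((1:ℝ)/2) ≤ (1 - w + ε * w) ^ ((1:ℝ)/2) :=
        Real.rpow_le_rpow h1w.le (by nlinarith) (by norm_num)
      have n1 : (0:ℝ) ≤ (1 - w) ^ ((1:ℝ)/2) := Real.rpow_nonneg h1w.le _
      have n2 : (0:ℝ) ≤ A ^ ((1:ℝ)/2) := Real.rpow_nonneg hA0.le _
      calc (1 - w) * A ^ ((1:ℝ)/2)
          = (1 - w) ^ ((1:ℝ)/2) * (1 - w) ^ ((1:ℝ)/2) * A ^ ((1:ℝ)/2) := by rw [hhalf]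
        _ = (1 - w) ^ ((1:ℝ)/2) * A ^ ((1:ℝ)/2) * (1 - w) ^ ((1:ℝ)/2) :=
            mul_right_comm _ _ _
        _ ≤ (1 - w) ^ ((1:ℝ)/2) * (1 - w + A * w) ^ ((1:ℝ)/2) * (1 - w + ε * w) ^ ((1:ℝ)/2) :=
            mul_le_mul (mul_le_mul_of_nonneg_left q1 n1) q2 n1 (mul_nonneg n1 (by positivity))
  have hmeasF : ∀ ε : ℝ, AEStronglyMeasurable (F ε) (volume.restrict (Set.Ioo 0 1)) := by
    intro ε
    have hFe : F ε = fun w =>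
        (4 * (a w) ^ 2 * x ^ 2 - 2 * a w) *
          Real.exp (-(c w) - (1 - w) * z ^ 2 / (2 * σz ^ 2 * (1 - w + ε * w)) - a w * x ^ 2) /
          ((1 - w) ^ ((1:ℝ)/2) * (1 - w + A * w) ^ ((1:ℝ)/2) * (1 - w + ε * w) ^ ((1:ℝ)/2)) :=
      funext (hF ε)
    rw [hFe]
    apply Measurable.aestronglyMeasurable
    fun_prop
  have hlim : ∀ w ∈ Set.Ioo (0:ℝ) 1, Tendsto (fun ε => F ε w) (𝓝[>] 0) (𝓝 (F 0 w)) := by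
    intro w hw
    obtain ⟨hw0, hw1⟩ := hw
    have h1w : 0 < 1 - w := by linarith
    have hca : ContinuousAt (fun ε : ℝ => F ε w) 0 := by
      have hFe : (fun ε : ℝ => F ε w) = fun ε =>
          (4 * (a w) ^ 2 * x ^ 2 - 2 * a w) *
            Real.exp (-(c w) - (1 - w) * z ^ 2 / (2 * σz ^ 2 * (1 - w + ε * w)) - a w * x ^ 2) /
            ((1 - w) ^ ((1:ℝ)/2) * (1 - w + A * w) ^ ((1:ℝ)/2) * (1 - w + ε * w) ^ ((1:ℝ)/2)) := by
        funext ε; exact hF ε w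
      rw [hFe]
      have hu : ContinuousAt (fun ε : ℝ => 1 - w + ε * w) 0 := by fun_prop
      have hu0 : (1 - w + (0:ℝ) * w) ≠ 0 := by simpa using h1w.ne'
      apply ContinuousAt.div
      · refine ContinuousAt.mul continuousAt_const ?_
        refine Real.continuous_exp.continuousAt.comp ?_
        refine ContinuousAt.sub (ContinuousAt.sub continuousAt_const ?_) continuousAt_const
        exact continuousAt_const.div (continuousAt_const.mul hu) (by
            simpa using mul_ne_zero (by positivity : (2:ℝ) * σz ^ 2 ≠ 0) hu0)
      · exact continuousAt_const.mul (hu.rpow_const (Or.inl hu0))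
      · have h2 : 0 < 1 - w + A * w := by nlinarith
        simp only [zero_mul, add_zero]
        positivity
    exact hca.tendsto.mono_left nhdsWithin_le_nhds
  have hint : IntegrableOn (F 0) (Set.Ioo 0 1) := by
    refine Integrable.mono' (g := fun _ => K)
      (integrableOn_const measure_Ioo_lt_top.ne) (hmeasF 0) ?_
    refine (ae_restrict_iff' measurableSet_Ioo).mpr (ae_of_all _ fun w hw => ?_)
    rw [Real.norm_eq_abs]
    exact hbound 0 le_rfl w hw
  refine ⟨hint, ?_⟩
  apply tendsto_integral_filter_of_dominated_convergence (bound := fun _ => K)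
  · exact Eventually.of_forall hmeasF
  · have hev : ∀ᶠ ε in 𝓝[>] (0:ℝ), 0 < ε := eventually_mem_nhdsWithin
    refine hev.mono fun ε hε => ?_
    refine (ae_restrict_iff' measurableSet_Ioo).mpr (ae_of_all _ fun w hw => ?_)
    rw [Real.norm_eq_abs]
    exact hbound ε hε.le w hw
  · exact integrableOn_const measure_Ioo_lt_top.ne
  · exact (ae_restrict_iff' measurableSet_Ioo).mpr (ae_of_all _ hlim)

/-- For the second transverse derivatives of the integrand of Eq. (16) (entering
the focusing field `E_ss` via Eq. (22)), the limit `ε → 0⁺` can be interchanged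
with the `w`-integration, and the limiting integrals (with `ψ₀` obtained by
setting `ε = 0`) are finite. Here `ψ ε x' y' w` is the integrand of Eq. (16)
viewed as a function of the transverse coordinates `(x', y')`. -/
theorem two_dim_limit_Ess (x y z σx σy σz : ℝ)
    (hσx : 0 < σx) (hσy : 0 < σy) (hσz : 0 < σz) (hyx : σy ≤ σx)
    (A : ℝ) (hA : A = σy ^ 2 / σx ^ 2)
    (ψ : ℝ → ℝ → ℝ → ℝ → ℝ)
    (hψ : ∀ ε, 0 ≤ ε → ∀ x' y' w, ψ ε x' y' w =
      Real.exp (-((1 - w) * x' ^ 2 / (2 * σx ^ 2 * (1 - w + A * w)))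
          - (1 - w) * y' ^ 2 / (2 * σy ^ 2)
          - (1 - w) * z ^ 2 / (2 * σz ^ 2 * (1 - w + ε * w))) /
        ((1 - w) ^ ((1 : ℝ) / 2) * (1 - w + A * w) ^ ((1 : ℝ) / 2)
          * (1 - w + ε * w) ^ ((1 : ℝ) / 2))) :
    IntegrableOn (fun w => iteratedDeriv 2 (fun x' => ψ 0 x' y w) x)
      (Set.Ioo (0 : ℝ) 1) ∧
    IntegrableOn (fun w => iteratedDeriv 2 (fun y' => ψ 0 x y' w) y)
      (Set.Ioo (0 : ℝ) 1) ∧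
    Tendsto (fun ε => ∫ w in Set.Ioo (0 : ℝ) 1, iteratedDeriv 2 (fun x' => ψ ε x' y w) x)
      (𝓝[>] 0)
      (𝓝 (∫ w in Set.Ioo (0 : ℝ) 1, iteratedDeriv 2 (fun x' => ψ 0 x' y w) x)) ∧
    Tendsto (fun ε => ∫ w in Set.Ioo (0 : ℝ) 1, iteratedDeriv 2 (fun y' => ψ ε x y' w) y)
      (𝓝[>] 0)
      (𝓝 (∫ w in Set.Ioo (0 : ℝ) 1, iteratedDeriv 2 (fun y' => ψ 0 x y' w) y)) := by
  have hA0 : 0 < A := by rw [hA]; positivity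
  have hA1 : A ≤ 1 := by
    rw [hA, div_le_one (by positivity)]
    nlinarith
  -- x-case setup
  set aX : ℝ → ℝ := fun w => (1 - w) / (2 * σx ^ 2 * (1 - w + A * w)) with haX
  set cX : ℝ → ℝ := fun w => (1 - w) * y ^ 2 / (2 * σy ^ 2) with hcX
  set FX : ℝ → ℝ → ℝ := fun ε w =>
      (4 * (aX w) ^ 2 * x ^ 2 - 2 * aX w) *
        Real.exp (-(cX w) - (1 - w) * z ^ 2 / (2 * σz ^ 2 * (1 - w + ε * w)) - aX w * x ^ 2) /
        ((1 - w) ^ ((1:ℝ)/2) * (1 - w + A * w) ^ ((1:ℝ)/2) * (1 - w + ε * w) ^ ((1:ℝ)/2))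
    with hFX
  have HX := dct_aux x z σz A hσz hA0 hA1 aX cX (1 / (2 * σx ^ 2 * A))
    (by rw [haX]; fun_prop) (by rw [hcX]; fun_prop)
    (by
      intro w hw
      obtain ⟨hw0, hw1⟩ := hw
      have h1w : 0 < 1 - w := by linarith
      have h2 : 0 < 1 - w + A * w := by nlinarith
      constructor
      · rw [haX]; positivity
      · rw [haX]
        calc (1 - w) / (2 * σx ^ 2 * (1 - w + A * w))
            ≤ (1 - w) / (2 * σx ^ 2 * A) :=
              div_le_div_of_nonneg_left h1w.le (by positivity)
                (by nlinarith [mul_nonneg (mul_nonneg h1w.le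
                  (by linarith : (0:ℝ) ≤ 1 - A)) (sq_nonneg σx)])
          _ = (1 - w) * (1 / (2 * σx ^ 2 * A)) := (mul_one_div _ _).symm)
    (by
      intro w hw
      obtain ⟨hw0, hw1⟩ := hw
      have h1w : 0 < 1 - w := by linarith
      rw [hcX]
      exact div_nonneg (mul_nonneg h1w.le (sq_nonneg y)) (by positivity))
    FX (fun ε w => rfl)
  have heqX : ∀ ε, 0 ≤ ε →
      (fun w => iteratedDeriv 2 (fun x' => ψ ε x' y w) x) = FX ε := by
    intro ε hε
    funext w
    have hrep : (fun x' => ψ ε x' y w) = fun t =>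
        Real.exp ((-(cX w) - (1 - w) * z ^ 2 / (2 * σz ^ 2 * (1 - w + ε * w))) - aX w * t ^ 2) /
          ((1 - w) ^ ((1:ℝ)/2) * (1 - w + A * w) ^ ((1:ℝ)/2) * (1 - w + ε * w) ^ ((1:ℝ)/2)) := by
      funext t
      rw [hψ ε hε]
      congr 1
      rw [hcX, haX]
      ring
    rw [hrep, iteratedDeriv_two_gauss]
  -- y-case setup
  set aY : ℝ → ℝ := fun w => (1 - w) / (2 * σy ^ 2) with haY
  set cY : ℝ → ℝ := fun w => (1 - w) * x ^ 2 / (2 * σx ^ 2 * (1 - w + A * w)) with hcY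
  set FY : ℝ → ℝ → ℝ := fun ε w =>
      (4 * (aY w) ^ 2 * y ^ 2 - 2 * aY w) *
        Real.exp (-(cY w) - (1 - w) * z ^ 2 / (2 * σz ^ 2 * (1 - w + ε * w)) - aY w * y ^ 2) /
        ((1 - w) ^ ((1:ℝ)/2) * (1 - w + A * w) ^ ((1:ℝ)/2) * (1 - w + ε * w) ^ ((1:ℝ)/2))
    with hFY
  have HY := dct_aux y z σz A hσz hA0 hA1 aY cY (1 / (2 * σy ^ 2))
    (by rw [haY]; fun_prop) (by rw [hcY]; fun_prop)
    (by
      intro w hw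
      obtain ⟨hw0, hw1⟩ := hw
      have h1w : 0 < 1 - w := by linarith
      constructor
      · rw [haY]; positivity
      · rw [haY]
        exact le_of_eq (mul_one_div (1 - w) (2 * σy ^ 2)).symm)
    (by
      intro w hw
      obtain ⟨hw0, hw1⟩ := hw
      have h1w : 0 < 1 - w := by linarith
      have h2 : 0 < 1 - w + A * w := by nlinarith
      rw [hcY]
      exact div_nonneg (mul_nonneg h1w.le (sq_nonneg x)) (by positivity))
    FY (fun ε w => rfl)
  have heqY : ∀ ε, 0 ≤ ε →
      (fun w => iteratedDeriv 2 (fun y' => ψ ε x y' w) y) = FY ε := by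
    intro ε hε
    funext w
    have hrep : (fun y' => ψ ε x y' w) = fun t =>
        Real.exp ((-(cY w) - (1 - w) * z ^ 2 / (2 * σz ^ 2 * (1 - w + ε * w))) - aY w * t ^ 2) /
          ((1 - w) ^ ((1:ℝ)/2) * (1 - w + A * w) ^ ((1:ℝ)/2) * (1 - w + ε * w) ^ ((1:ℝ)/2)) := by
      funext t
      rw [hψ ε hε]
      congr 1
      rw [hcY, haY]
      ring
    rw [hrep, iteratedDeriv_two_gauss]
  refine ⟨?_, ?_, ?_, ?_⟩
  · rw [heqX 0 le_rfl]; exact HX.1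
  · rw [heqY 0 le_rfl]; exact HY.1
  · rw [heqX 0 le_rfl]
    refine HX.2.congr' ?_
    refine eventually_mem_nhdsWithin.mono fun ε hε => ?_
    show (∫ w in Set.Ioo (0:ℝ) 1, FX ε w)
      = ∫ w in Set.Ioo (0:ℝ) 1, iteratedDeriv 2 (fun x' => ψ ε x' y w) x
    rw [heqX ε (le_of_lt hε)]
  · rw [heqY 0 le_rfl]
    refine HY.2.congr' ?_
    refine eventually_mem_nhdsWithin.mono fun ε hε => ?_
    show (∫ w in Set.Ioo (0:ℝ) 1, FY ε w)
      = ∫ w in Set.Ioo (0:ℝ) 1, iteratedDeriv 2 (fun y' => ψ ε x y' w) y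
    rw [heqY ε (le_of_lt hε)]
end

section
/- Fix real numbers x, y, z and positive reals σ_x, σ_y, σ_z with σ_y < σ_x, and set A := σ_y²/σ_x², so 0 < A < 1. For 0 < ε < 1 define I_ε := ∫₀¹ (1−w)^{1/2}·exp(−(1−w)x²/(2σ_x²(1−w+Aw)) − (1−w)y²/(2σ_y²) − (1−w)z²/(2σ_z²(1−w+εw))) / ((1−w+Aw)^{1/2}·(1−w+εw)^{3/2}) dw. Then I_ε ≤ (2/((1−A)^{1/2}·ε^{1/2}))·((1 − ε^{1/2})/(1 − ε)). -/
open MeasureTheory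

lemma Ig_eval (ε : ℝ) (hε0 : 0 < ε) (hε1 : ε < 1) :
    ∫ w in Set.Ioo (0:ℝ) 1, (1 - (1-ε)*w) ^ (-(3:ℝ)/2)
      = (2/(1-ε)) * (ε ^ (-(1:ℝ)/2) - 1) := by
  have h1ε : (0:ℝ) < 1 - ε := by linarith
  have hpos : ∀ w ∈ Set.Icc (0:ℝ) 1, 0 < 1 - (1-ε)*w := by
    intro w hw
    nlinarith [hw.1, hw.2]
  have hF : ∀ w ∈ Set.Icc (0:ℝ) 1, HasDerivAt (fun t => (2/(1-ε)) * (1 - (1-ε)*t) ^ (-(1:ℝ)/2))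
      ((1 - (1-ε)*w) ^ (-(3:ℝ)/2)) w := by
    intro w hw
    have hbase : HasDerivAt (fun t : ℝ => 1 - (1-ε)*t) (-(1-ε)) w := by
      simpa using ((hasDerivAt_id w).const_mul (1-ε)).const_sub 1
    have h := (hbase.rpow_const (p := -(1:ℝ)/2) (Or.inl (ne_of_gt (hpos w hw))))
    have h2 := h.const_mul (2/(1-ε))
    refine h2.congr_deriv ?_
    have : (1 - (1-ε)*w) ^ (-(3:ℝ)/2) = (1 - (1-ε)*w) ^ ((-(1:ℝ)/2) - 1) := by
      norm_num
    rw [this]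
    field_simp
  have hcont : ContinuousOn (fun w : ℝ => (1 - (1-ε)*w) ^ (-(3:ℝ)/2)) (Set.Icc 0 1) := by
    apply ContinuousOn.rpow_const
    · fun_prop
    · intro w hw; exact Or.inl (ne_of_gt (hpos w hw))
  have hint : IntervalIntegrable (fun w : ℝ => (1 - (1-ε)*w) ^ (-(3:ℝ)/2)) volume 0 1 := by
    apply ContinuousOn.intervalIntegrable
    simpa using hcont
  have := intervalIntegral.integral_eq_sub_of_hasDerivAt (a := 0) (b := 1)
    (by intro w hw; exact hF w (by simpa using hw)) hint
  rw [intervalIntegral.integral_of_le (by norm_num : (0:ℝ) ≤ 1), integral_Ioc_eq_integral_Ioo] at this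
  rw [this]
  norm_num
  rw [mul_sub, mul_one]

set_option maxHeartbeats 1000000 in
/-- The upper bound on the integral `I_ε` appearing in the longitudinal field
component `E_sz` (Eqs. (26)–(28)):
`I_ε ≤ (2/((1−A)^{1/2} ε^{1/2})) · (1 − ε^{1/2})/(1 − ε)`. -/
theorem I_eps_upper_bound (x y z σx σy σz : ℝ)
    (hσx : 0 < σx) (hσy : 0 < σy) (hσz : 0 < σz) (hyx : σy < σx)
    (A : ℝ) (hA : A = σy ^ 2 / σx ^ 2)
    (ε : ℝ) (hε0 : 0 < ε) (hε1 : ε < 1) :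
    ∫ w in Set.Ioo (0 : ℝ) 1,
      (1 - w) ^ ((1 : ℝ) / 2) *
        Real.exp (-((1 - w) * x ^ 2 / (2 * σx ^ 2 * (1 - w + A * w)))
            - (1 - w) * y ^ 2 / (2 * σy ^ 2)
            - (1 - w) * z ^ 2 / (2 * σz ^ 2 * (1 - w + ε * w))) /
        ((1 - w + A * w) ^ ((1 : ℝ) / 2) * (1 - w + ε * w) ^ ((3 : ℝ) / 2))
      ≤ (2 / ((1 - A) ^ ((1 : ℝ) / 2) * ε ^ ((1 : ℝ) / 2))) *
          ((1 - ε ^ ((1 : ℝ) / 2)) / (1 - ε)) := by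
  have hA0 : 0 < A := by rw [hA]; positivity
  have hA1 : A < 1 := by
    rw [hA, div_lt_one (by positivity)]
    nlinarith
  have h1A : (0:ℝ) < 1 - A := by linarith
  set f : ℝ → ℝ := fun w =>
      (1 - w) ^ ((1 : ℝ) / 2) *
        Real.exp (-((1 - w) * x ^ 2 / (2 * σx ^ 2 * (1 - w + A * w)))
            - (1 - w) * y ^ 2 / (2 * σy ^ 2)
            - (1 - w) * z ^ 2 / (2 * σz ^ 2 * (1 - w + ε * w))) /
        ((1 - w + A * w) ^ ((1 : ℝ) / 2) * (1 - w + ε * w) ^ ((3 : ℝ) / 2)) with hf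
  set g : ℝ → ℝ := fun w => (1-A) ^ (-(1:ℝ)/2) * (1 - (1-ε)*w) ^ (-(3:ℝ)/2) with hg
  -- positivity facts on Icc
  have hpA : ∀ w ∈ Set.Icc (0:ℝ) 1, 0 < 1 - w + A * w := by
    intro w hw; nlinarith [hw.1, hw.2]
  have hpE : ∀ w ∈ Set.Icc (0:ℝ) 1, 0 < 1 - w + ε * w := by
    intro w hw; nlinarith [hw.1, hw.2]
  -- pointwise bound on Ioo
  have hbound : ∀ w ∈ Set.Ioo (0:ℝ) 1, f w ≤ g w := by
    intro w hw
    have hw' : w ∈ Set.Icc (0:ℝ) 1 := ⟨le_of_lt hw.1, le_of_lt hw.2⟩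
    have h1w : 0 < 1 - w := by linarith [hw.2]
    have hpa := hpA w hw'
    have hpe := hpE w hw'
    have hexp : Real.exp (-((1 - w) * x ^ 2 / (2 * σx ^ 2 * (1 - w + A * w)))
            - (1 - w) * y ^ 2 / (2 * σy ^ 2)
            - (1 - w) * z ^ 2 / (2 * σz ^ 2 * (1 - w + ε * w))) ≤ 1 := by
      apply Real.exp_le_one_iff.mpr
      have t1 : 0 ≤ (1 - w) * x ^ 2 / (2 * σx ^ 2 * (1 - w + A * w)) := by positivity
      have t2 : 0 ≤ (1 - w) * y ^ 2 / (2 * σy ^ 2) := by positivity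
      have t3 : 0 ≤ (1 - w) * z ^ 2 / (2 * σz ^ 2 * (1 - w + ε * w)) := by positivity
      linarith
    have hnum : (1 - w) ^ ((1 : ℝ) / 2) *
        Real.exp (-((1 - w) * x ^ 2 / (2 * σx ^ 2 * (1 - w + A * w)))
            - (1 - w) * y ^ 2 / (2 * σy ^ 2)
            - (1 - w) * z ^ 2 / (2 * σz ^ 2 * (1 - w + ε * w)))
        ≤ (1 - w) ^ ((1 : ℝ) / 2) := by
      nlinarith [Real.rpow_nonneg (le_of_lt h1w) ((1:ℝ)/2), Real.exp_pos (-((1 - w) * x ^ 2 / (2 * σx ^ 2 * (1 - w + A * w)))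
            - (1 - w) * y ^ 2 / (2 * σy ^ 2)
            - (1 - w) * z ^ 2 / (2 * σz ^ 2 * (1 - w + ε * w)))]
    have hden : ((1-A) * (1 - w)) ^ ((1:ℝ)/2) * (1 - w + ε * w) ^ ((3:ℝ)/2)
        ≤ (1 - w + A * w) ^ ((1 : ℝ) / 2) * (1 - w + ε * w) ^ ((3 : ℝ) / 2) := by
      apply mul_le_mul_of_nonneg_right _ (Real.rpow_nonneg (le_of_lt hpe) _)
      apply Real.rpow_le_rpow (by positivity) _ (by norm_num)
      nlinarith [hw.1]
    have hdpos : 0 < ((1-A) * (1 - w)) ^ ((1:ℝ)/2) * (1 - w + ε * w) ^ ((3:ℝ)/2) := by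
      apply mul_pos <;> exact Real.rpow_pos_of_pos (by positivity) _
    have step1 : f w ≤ (1 - w) ^ ((1 : ℝ) / 2) /
        (((1-A) * (1 - w)) ^ ((1:ℝ)/2) * (1 - w + ε * w) ^ ((3:ℝ)/2)) :=
      div_le_div₀ (Real.rpow_nonneg (le_of_lt h1w) _) hnum hdpos hden
    refine step1.trans (le_of_eq ?_)
    rw [hg]
    have heq1 : (1 - w + ε * w) = 1 - (1-ε)*w := by ring
    rw [Real.mul_rpow (le_of_lt h1A) (le_of_lt h1w), heq1]
    have h2 : (1 - w) ^ ((1:ℝ)/2) ≠ 0 := ne_of_gt (Real.rpow_pos_of_pos h1w _)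
    have h3 : (1 - A) ^ ((1:ℝ)/2) ≠ 0 := ne_of_gt (Real.rpow_pos_of_pos h1A _)
    have h4 : (1 - (1-ε)*w) ^ ((3:ℝ)/2) ≠ 0 :=
      ne_of_gt (Real.rpow_pos_of_pos (by nlinarith [hw.2]) _)
    have h5 : (1 - (1-ε)*w) ^ (-(3:ℝ)/2) = ((1 - (1-ε)*w) ^ ((3:ℝ)/2))⁻¹ := by
      rw [← Real.rpow_neg (le_of_lt (by nlinarith [hw.2] : (0:ℝ) < 1 - (1-ε)*w))]
      norm_num
    have h6 : (1 - A) ^ (-(1:ℝ)/2) = ((1 - A) ^ ((1:ℝ)/2))⁻¹ := by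
      rw [← Real.rpow_neg (le_of_lt h1A)]
      norm_num
    beta_reduce
    rw [h5, h6]
    field_simp
  -- integrability
  have hcontf : ContinuousOn f (Set.Icc 0 1) := by
    rw [hf]
    apply ContinuousOn.div
    · apply ContinuousOn.mul
      · apply ContinuousOn.rpow_const (by fun_prop)
        intro w hw; right; norm_num
      · apply ContinuousOn.rexp
        apply ContinuousOn.sub
        apply ContinuousOn.sub
        · apply ContinuousOn.neg
          apply ContinuousOn.div (by fun_prop) (by fun_prop)
          intro w hw
          have := hpA w hw
          positivity
        · apply ContinuousOn.div (by fun_prop) (by fun_prop)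
          intro w hw; positivity
        · apply ContinuousOn.div (by fun_prop) (by fun_prop)
          intro w hw
          have := hpE w hw
          positivity
    · apply ContinuousOn.mul
      · apply ContinuousOn.rpow_const (by fun_prop)
        intro w hw; exact Or.inl (ne_of_gt (hpA w hw))
      · apply ContinuousOn.rpow_const (by fun_prop)
        intro w hw; exact Or.inl (ne_of_gt (hpE w hw))
    · intro w hw
      exact ne_of_gt (mul_pos (Real.rpow_pos_of_pos (hpA w hw) _) (Real.rpow_pos_of_pos (hpE w hw) _))
  have hcontg : ContinuousOn g (Set.Icc 0 1) := by
    rw [hg]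
    apply ContinuousOn.mul continuousOn_const
    apply ContinuousOn.rpow_const (by fun_prop)
    intro w hw
    left
    have : 0 < 1 - (1-ε)*w := by nlinarith [hw.1, hw.2]
    exact ne_of_gt this
  have hmeas : MeasurableSet (Set.Ioo (0:ℝ) 1) := measurableSet_Ioo
  have hif : IntegrableOn f (Set.Ioo 0 1) volume :=
    (hcontf.integrableOn_Icc).mono_set Set.Ioo_subset_Icc_self
  have hig : IntegrableOn g (Set.Ioo 0 1) volume :=
    (hcontg.integrableOn_Icc).mono_set Set.Ioo_subset_Icc_self
  have hmono : ∫ w in Set.Ioo (0:ℝ) 1, f w ≤ ∫ w in Set.Ioo (0:ℝ) 1, g w :=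
    setIntegral_mono_on hif hig hmeas hbound
  refine hmono.trans ?_
  have : ∫ w in Set.Ioo (0:ℝ) 1, g w
      = (1-A) ^ (-(1:ℝ)/2) * ∫ w in Set.Ioo (0:ℝ) 1, (1 - (1-ε)*w) ^ (-(3:ℝ)/2) := by
    rw [hg]
    exact integral_const_mul _ _
  rw [this, Ig_eval ε hε0 hε1]
  -- algebra
  have hε12 : (0:ℝ) < ε ^ ((1:ℝ)/2) := Real.rpow_pos_of_pos hε0 _
  have hA12 : (0:ℝ) < (1-A) ^ ((1:ℝ)/2) := Real.rpow_pos_of_pos h1A _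
  have h6 : (1 - A) ^ (-(1:ℝ)/2) = ((1 - A) ^ ((1:ℝ)/2))⁻¹ := by
    rw [← Real.rpow_neg (le_of_lt h1A)]; norm_num
  have h7 : ε ^ (-(1:ℝ)/2) = (ε ^ ((1:ℝ)/2))⁻¹ := by
    rw [← Real.rpow_neg (le_of_lt hε0)]; norm_num
  rw [h6, h7]
  apply le_of_eq
  have h1ε : (0:ℝ) < 1 - ε := by linarith
  have h1εne : (1:ℝ) - ε ≠ 0 := ne_of_gt h1ε
  field_simp
end

section
/- Fix real numbers x, y, z and positive reals σ_x, σ_y, σ_z with σ_y < σ_x, and set A := σ_y²/σ_x². For 0 < ε < 1 define I_ε := ∫₀¹ (1−w)^{1/2}·exp(−(1−w)x²/(2σ_x²(1−w+Aw)) − (1−w)y²/(2σ_y²) − (1−w)z²/(2σ_z²(1−w+εw))) / ((1−w+Aw)^{1/2}·(1−w+εw)^{3/2}) dw. Then ε·I_ε ≤ 2ε^{1/2}/((1−A)^{1/2}·(1 + ε^{1/2})) for all 0 < ε < 1, and consequently ε·I_ε → 0 as ε → 0⁺. -/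
open MeasureTheory Filter Topology


lemma key_integral (ε : ℝ) (hε : 0 < ε) (hε1 : ε < 1) :
    ∫ w in Set.Ioo (0:ℝ) 1, (1 - w + ε * w) ^ (-(3:ℝ)/2)
      = 2 / (ε ^ ((1:ℝ)/2) * (1 + ε ^ ((1:ℝ)/2))) := by
  have hne : (1:ℝ) - ε ≠ 0 := by linarith
  have hpos : ∀ w ∈ Set.uIcc (0:ℝ) 1, 0 < 1 - w + ε * w := by
    intro w hw
    rw [Set.uIcc_of_le (by norm_num)] at hw
    nlinarith [hw.1, hw.2]
  have hderiv : ∀ w ∈ Set.uIcc (0:ℝ) 1,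
      HasDerivAt (fun w => (2/(1-ε)) * (1 - w + ε * w) ^ (-(1:ℝ)/2))
        ((1 - w + ε * w) ^ (-(3:ℝ)/2)) w := by
    intro w hw
    have hu : HasDerivAt (fun w : ℝ => 1 - w + ε * w) (-1 + ε) w := by
      have h := ((hasDerivAt_id' w).const_sub (1:ℝ)).add ((hasDerivAt_id' w).const_mul ε)
      rw [mul_one] at h; exact h
    have h2 := (hu.rpow_const (p := -(1:ℝ)/2) (Or.inl (hpos w hw).ne')).const_mul (2/(1-ε))
    refine h2.congr_deriv ?_
    have he : -(1:ℝ)/2 - 1 = -(3:ℝ)/2 := by norm_num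
    rw [he]
    generalize (1 - w + ε * w) ^ (-(3:ℝ)/2) = X
    field_simp
    ring
  have hcont : ContinuousOn (fun w : ℝ => (1 - w + ε * w) ^ (-(3:ℝ)/2)) (Set.uIcc 0 1) := by
    apply ContinuousOn.rpow_const
    · fun_prop
    · intro w hw; exact Or.inl (hpos w hw).ne'
  have hint : IntervalIntegrable (fun w : ℝ => (1 - w + ε * w) ^ (-(3:ℝ)/2)) volume 0 1 :=
    hcont.intervalIntegrable
  have heq := intervalIntegral.integral_eq_sub_of_hasDerivAt hderiv hint
  rw [intervalIntegral.integral_of_le (by norm_num : (0:ℝ) ≤ 1),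
    MeasureTheory.integral_Ioc_eq_integral_Ioo] at heq
  rw [heq]
  have h1 : (1 - 1 + ε * 1 : ℝ) = ε := by ring
  have h0 : (1 - 0 + ε * 0 : ℝ) = 1 := by ring
  rw [h1, h0, Real.one_rpow]
  set s := ε ^ ((1:ℝ)/2) with hs
  have hspos : 0 < s := Real.rpow_pos_of_pos hε _
  have hs2 : s ^ 2 = ε := by
    rw [hs, ← Real.rpow_natCast (ε ^ ((1:ℝ)/2)) 2, ← Real.rpow_mul hε.le]
    norm_num
  have hεneg : ε ^ (-(1:ℝ)/2) = s⁻¹ := by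
    rw [show (-(1:ℝ))/2 = -(1/2) by norm_num, Real.rpow_neg hε.le, hs]
  rw [hεneg, ← hs2]
  have hs1 : s < 1 := by nlinarith
  have h1s : (1:ℝ) + s ≠ 0 := by positivity
  have hne2 : (1:ℝ) - s ^ 2 ≠ 0 := by nlinarith
  field_simp
  ring


section Aux
variable (x y z σx σy σz A : ℝ)

lemma main_bound (hσx : 0 < σx) (hσy : 0 < σy) (hσz : 0 < σz)
    (hA0 : 0 < A) (hA1 : A < 1) (ε : ℝ) (hε : 0 < ε) (hε1 : ε < 1) :
    (∫ w in Set.Ioo (0 : ℝ) 1,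
      (1 - w) ^ ((1 : ℝ) / 2) *
        Real.exp (-((1 - w) * x ^ 2 / (2 * σx ^ 2 * (1 - w + A * w)))
            - (1 - w) * y ^ 2 / (2 * σy ^ 2)
            - (1 - w) * z ^ 2 / (2 * σz ^ 2 * (1 - w + ε * w))) /
        ((1 - w + A * w) ^ ((1 : ℝ) / 2) * (1 - w + ε * w) ^ ((3 : ℝ) / 2)))
    ≤ ∫ w in Set.Ioo (0 : ℝ) 1,
        (1 - A) ^ (-(1:ℝ)/2) * (1 - w + ε * w) ^ (-(3:ℝ)/2) := by
  set f : ℝ → ℝ := fun w =>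
      (1 - w) ^ ((1 : ℝ) / 2) *
        Real.exp (-((1 - w) * x ^ 2 / (2 * σx ^ 2 * (1 - w + A * w)))
            - (1 - w) * y ^ 2 / (2 * σy ^ 2)
            - (1 - w) * z ^ 2 / (2 * σz ^ 2 * (1 - w + ε * w))) /
        ((1 - w + A * w) ^ ((1 : ℝ) / 2) * (1 - w + ε * w) ^ ((3 : ℝ) / 2)) with hf
  set g : ℝ → ℝ := fun w => (1 - A) ^ (-(1:ℝ)/2) * (1 - w + ε * w) ^ (-(3:ℝ)/2) with hg
  have h1A : (0:ℝ) < 1 - A := by linarith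
  -- pointwise facts on Ioo
  have hle : ∀ w ∈ Set.Ioo (0:ℝ) 1, f w ≤ g w := by
    intro w hw
    obtain ⟨hw0, hw1⟩ := hw
    have h1w : (0:ℝ) < 1 - w := by linarith
    have hP : (0:ℝ) < 1 - w + A * w := by nlinarith
    have hQ : (0:ℝ) < 1 - w + ε * w := by nlinarith
    have hE : Real.exp (-((1 - w) * x ^ 2 / (2 * σx ^ 2 * (1 - w + A * w)))
            - (1 - w) * y ^ 2 / (2 * σy ^ 2)
            - (1 - w) * z ^ 2 / (2 * σz ^ 2 * (1 - w + ε * w))) ≤ 1 := by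
      rw [Real.exp_le_one_iff]
      have h1 : 0 ≤ (1 - w) * x ^ 2 / (2 * σx ^ 2 * (1 - w + A * w)) :=
        div_nonneg (mul_nonneg h1w.le (sq_nonneg x)) (by positivity)
      have h2 : 0 ≤ (1 - w) * y ^ 2 / (2 * σy ^ 2) :=
        div_nonneg (mul_nonneg h1w.le (sq_nonneg y)) (by positivity)
      have h3 : 0 ≤ (1 - w) * z ^ 2 / (2 * σz ^ 2 * (1 - w + ε * w)) :=
        div_nonneg (mul_nonneg h1w.le (sq_nonneg z)) (by positivity)
      linarith
    have hc : (0:ℝ) < (1-A) ^ ((1:ℝ)/2) := Real.rpow_pos_of_pos h1A _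
    have hN : (1 - w) ^ ((1:ℝ)/2) ≤ (1 - A) ^ (-(1:ℝ)/2) * (1 - w + A*w) ^ ((1:ℝ)/2) := by
      have key : (1 - A) * (1 - w) ≤ 1 - w + A * w := by nlinarith
      have h := Real.rpow_le_rpow (by positivity) key (by norm_num : (0:ℝ) ≤ 1/2)
      rw [Real.mul_rpow h1A.le h1w.le] at h
      rw [show (-(1:ℝ)/2) = -((1:ℝ)/2) by norm_num, Real.rpow_neg h1A.le,
        inv_mul_eq_div, le_div_iff₀ hc]
      nlinarith [h, hc, Real.rpow_nonneg h1w.le ((1:ℝ)/2)]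
    have hD : (0:ℝ) < (1 - w + A * w) ^ ((1:ℝ)/2) * (1 - w + ε * w) ^ ((3:ℝ)/2) := by
      positivity
    have step1 : f w ≤ ((1 - A) ^ (-(1:ℝ)/2) * (1 - w + A*w) ^ ((1:ℝ)/2)) /
        ((1 - w + A * w) ^ ((1:ℝ)/2) * (1 - w + ε * w) ^ ((3:ℝ)/2)) := by
      rw [hf]
      apply div_le_div_of_nonneg_right ?_ hD.le
      calc (1 - w) ^ ((1:ℝ)/2) * Real.exp (-((1 - w) * x ^ 2 / (2 * σx ^ 2 * (1 - w + A * w)))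
            - (1 - w) * y ^ 2 / (2 * σy ^ 2)
            - (1 - w) * z ^ 2 / (2 * σz ^ 2 * (1 - w + ε * w)))
          ≤ (1 - w) ^ ((1:ℝ)/2) :=
            mul_le_of_le_one_right (Real.rpow_nonneg h1w.le _) hE
        _ ≤ (1 - A) ^ (-(1:ℝ)/2) * (1 - w + A*w) ^ ((1:ℝ)/2) := hN
    have step2 : ((1 - A) ^ (-(1:ℝ)/2) * (1 - w + A*w) ^ ((1:ℝ)/2)) /
        ((1 - w + A * w) ^ ((1:ℝ)/2) * (1 - w + ε * w) ^ ((3:ℝ)/2)) = g w := by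
      simp only [hg]
      have hQ2 : (1 - w + ε * w) ^ ((3:ℝ)/2) ≠ 0 := by positivity
      have hP2 : (1 - w + A * w) ^ ((1:ℝ)/2) ≠ 0 := by positivity
      rw [show (-(3:ℝ)/2) = -((3:ℝ)/2) by norm_num, Real.rpow_neg hQ.le]
      field_simp
    rw [← step2]; exact step1
  -- nonnegativity of f on Ioo
  have hf_nonneg : ∀ w ∈ Set.Ioo (0:ℝ) 1, 0 ≤ f w := by
    intro w hw
    obtain ⟨hw0, hw1⟩ := hw
    have h1w : (0:ℝ) < 1 - w := by linarith
    have hP : (0:ℝ) < 1 - w + A * w := by nlinarith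
    have hQ : (0:ℝ) < 1 - w + ε * w := by nlinarith
    rw [hf]
    positivity
  -- nonnegativity of g on Ioo
  have hg_nonneg : ∀ w ∈ Set.Ioo (0:ℝ) 1, 0 ≤ g w := by
    intro w hw
    obtain ⟨hw0, hw1⟩ := hw
    have hQ : (0:ℝ) < 1 - w + ε * w := by nlinarith
    rw [hg]
    positivity
  -- integrability of g
  have hg_int : IntegrableOn g (Set.Ioo (0:ℝ) 1) := by
    have hcont : ContinuousOn g (Set.Icc (0:ℝ) 1) := by
      apply ContinuousOn.mul continuousOn_const
      apply ContinuousOn.rpow_const (by fun_prop)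
      intro w hw
      have : (0:ℝ) < 1 - w + ε * w := by nlinarith [hw.1, hw.2]
      exact Or.inl this.ne'
    exact (hcont.integrableOn_compact isCompact_Icc).mono_set Set.Ioo_subset_Icc_self
  -- measurability of f
  have hf_meas : AEStronglyMeasurable f (volume.restrict (Set.Ioo (0:ℝ) 1)) := by
    apply Measurable.aestronglyMeasurable
    rw [hf]
    have m1 : Measurable fun w : ℝ => 1 - w + ε * w :=
      (measurable_const.sub measurable_id).add (measurable_id.const_mul ε)
    have m2 : Measurable fun w : ℝ => 1 - w + A * w :=
      (measurable_const.sub measurable_id).add (measurable_id.const_mul A)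
    apply Measurable.div
    · apply Measurable.mul
      · exact (measurable_const.sub measurable_id).pow measurable_const
      · fun_prop
    · exact (m2.pow measurable_const).mul (m1.pow measurable_const)
  -- integrability of f
  have hf_int : IntegrableOn f (Set.Ioo (0:ℝ) 1) := by
    apply Integrable.mono hg_int hf_meas
    rw [ae_restrict_iff' measurableSet_Ioo]
    filter_upwards with w hw
    rw [Real.norm_eq_abs, Real.norm_eq_abs, abs_of_nonneg (hf_nonneg w hw),
      abs_of_nonneg (hg_nonneg w hw)]
    exact hle w hw
  exact setIntegral_mono_on hf_int hg_int measurableSet_Ioo hle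

end Aux


/-- The main conclusion of Section 4: the quantity `ε · I_ε`, to which the
longitudinal field component `E_sz` is proportional, satisfies
`ε·I_ε ≤ 2ε^{1/2}/((1−A)^{1/2}(1+ε^{1/2}))` for `0 < ε < 1`, and hence
`ε·I_ε → 0` as `ε → 0⁺`. -/
theorem Esz_vanishes_in_2d_limit (x y z σx σy σz : ℝ)
    (hσx : 0 < σx) (hσy : 0 < σy) (hσz : 0 < σz) (hyx : σy < σx)
    (A : ℝ) (hA : A = σy ^ 2 / σx ^ 2)
    (I : ℝ → ℝ)
    (hI : ∀ ε, I ε = ∫ w in Set.Ioo (0 : ℝ) 1,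
      (1 - w) ^ ((1 : ℝ) / 2) *
        Real.exp (-((1 - w) * x ^ 2 / (2 * σx ^ 2 * (1 - w + A * w)))
            - (1 - w) * y ^ 2 / (2 * σy ^ 2)
            - (1 - w) * z ^ 2 / (2 * σz ^ 2 * (1 - w + ε * w))) /
        ((1 - w + A * w) ^ ((1 : ℝ) / 2) * (1 - w + ε * w) ^ ((3 : ℝ) / 2))) :
    (∀ ε : ℝ, 0 < ε → ε < 1 →
      ε * I ε ≤ 2 * ε ^ ((1 : ℝ) / 2) /
        ((1 - A) ^ ((1 : ℝ) / 2) * (1 + ε ^ ((1 : ℝ) / 2)))) ∧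
    Tendsto (fun ε => ε * I ε) (𝓝[>] 0) (𝓝 0) := by
  have hA0 : 0 < A := by rw [hA]; positivity
  have hA1 : A < 1 := by
    rw [hA, div_lt_one (by positivity)]
    nlinarith
  have h1A : (0:ℝ) < 1 - A := by linarith
  have hbnd : ∀ ε : ℝ, 0 < ε → ε < 1 →
      ε * I ε ≤ 2 * ε ^ ((1 : ℝ) / 2) /
        ((1 - A) ^ ((1 : ℝ) / 2) * (1 + ε ^ ((1 : ℝ) / 2))) := by
    intro ε hε hε1
    have h1 := main_bound x y z σx σy σz A hσx hσy hσz hA0 hA1 ε hε hε1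
    rw [← hI ε] at h1
    have h2 : (∫ w in Set.Ioo (0:ℝ) 1,
          (1 - A) ^ (-(1:ℝ)/2) * (1 - w + ε * w) ^ (-(3:ℝ)/2))
        = (1 - A) ^ (-(1:ℝ)/2) * (2 / (ε ^ ((1:ℝ)/2) * (1 + ε ^ ((1:ℝ)/2)))) := by
      rw [MeasureTheory.integral_const_mul, key_integral ε hε hε1]
    have hIle : I ε ≤ (1 - A) ^ (-(1:ℝ)/2) *
        (2 / (ε ^ ((1:ℝ)/2) * (1 + ε ^ ((1:ℝ)/2)))) := h2 ▸ h1
    refine (mul_le_mul_of_nonneg_left hIle hε.le).trans_eq ?_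
    set s := ε ^ ((1:ℝ)/2) with hs
    have hspos : 0 < s := Real.rpow_pos_of_pos hε _
    have hs2 : s ^ 2 = ε := by
      rw [hs, ← Real.rpow_natCast (ε ^ ((1:ℝ)/2)) 2, ← Real.rpow_mul hε.le]
      norm_num
    have hcA : (0:ℝ) < (1 - A) ^ ((1:ℝ)/2) := Real.rpow_pos_of_pos h1A _
    have hinv : (1 - A) ^ (-(1:ℝ)/2) = ((1 - A) ^ ((1:ℝ)/2))⁻¹ := by
      rw [show (-(1:ℝ)/2) = -((1:ℝ)/2) by norm_num, Real.rpow_neg h1A.le]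
    rw [hinv, ← hs2]
    have h1s : (0:ℝ) < 1 + s := by linarith
    field_simp
  refine ⟨hbnd, ?_⟩
  have hs0 : Tendsto (fun ε : ℝ => ε ^ ((1:ℝ)/2)) (𝓝[>] (0:ℝ)) (𝓝 0) := by
    have hc : ContinuousAt (fun ε : ℝ => ε ^ ((1:ℝ)/2)) 0 :=
      Real.continuousAt_rpow_const 0 _ (Or.inr (by norm_num))
    have h := hc.tendsto.mono_left (nhdsWithin_le_nhds : 𝓝[>] (0:ℝ) ≤ 𝓝 0)
    simpa [Real.zero_rpow (by norm_num : ((1:ℝ)/2) ≠ 0)] using h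
  have hcA : (0:ℝ) < (1 - A) ^ ((1:ℝ)/2) := Real.rpow_pos_of_pos h1A _
  have hupper : Tendsto (fun ε : ℝ => 2 * ε ^ ((1:ℝ)/2) /
      ((1 - A) ^ ((1:ℝ)/2) * (1 + ε ^ ((1:ℝ)/2)))) (𝓝[>] (0:ℝ)) (𝓝 0) := by
    have hden : Tendsto (fun ε : ℝ => (1 - A) ^ ((1:ℝ)/2) * (1 + ε ^ ((1:ℝ)/2)))
        (𝓝[>] (0:ℝ)) (𝓝 ((1 - A) ^ ((1:ℝ)/2) * (1 + 0))) :=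
      tendsto_const_nhds.mul (tendsto_const_nhds.add hs0)
    have hnum : Tendsto (fun ε : ℝ => 2 * ε ^ ((1:ℝ)/2)) (𝓝[>] (0:ℝ))
        (𝓝 (2 * 0)) := hs0.const_mul 2
    have h := hnum.div hden (by simpa using hcA.ne')
    simpa [Pi.div_def] using h
  apply tendsto_of_tendsto_of_tendsto_of_le_of_le' tendsto_const_nhds hupper
  · filter_upwards [self_mem_nhdsWithin] with ε hε
    have hε' : (0:ℝ) < ε := hε
    apply mul_nonneg hε'.le
    rw [hI]
    apply MeasureTheory.setIntegral_nonneg measurableSet_Ioo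
    intro w hw
    have h1w : (0:ℝ) < 1 - w := by linarith [hw.2]
    have hP : (0:ℝ) < 1 - w + A * w := by nlinarith [hw.1, hw.2]
    have hQ : (0:ℝ) < 1 - w + ε * w := by nlinarith [hw.1, hw.2]
    exact div_nonneg
      (mul_nonneg (Real.rpow_nonneg h1w.le _) (Real.exp_pos _).le)
      (mul_nonneg (Real.rpow_nonneg hP.le _) (Real.rpow_nonneg hQ.le _))
  · filter_upwards [Ioo_mem_nhdsGT_of_mem
      (by norm_num : (0:ℝ) ∈ Set.Ico (0:ℝ) 1)] with ε hε
    exact hbnd ε hε.1 hε.2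
end
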